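/- For every integer s ≥ 1 and every integer r with s ≤ r ≤ 2s−1, the function B_{r,s}(p) − 2p + 1 is strictly positive for all p ∈ [0,1). (Equivalently, the threshold r(s), defined as the least r for which B_{r,s}(p) − 2p + 1 has a root in (0,1), satisfies r(s) ≥ 2s.) -/
import Mathlib


/-- `B r s p = ∑_{i=0}^{s-1} C(r,i) p^{r-i} (1-p)^i`, the probability that a
Binomial(r,p) random variable exceeds `r - s`. -/
noncomputable def B (r s : ℕ) (p : ℝ) : ℝ :=
  ∑ i ∈ Finset.range s, (r.choose i : ℝ) * p ^ (r - i) * (1 - p) ^ i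

lemma pow_key {p q : ℝ} (hq0 : 0 ≤ q) (hqp : q ≤ p) (a d : ℕ) :
    p ^ (a + 1) * q ^ (a + 1 + d) ≤ p ^ (a + 1 + d) * q ^ (a + 1) := by
  rw [pow_add q (a+1) d, pow_add p (a+1) d]
  calc p ^ (a+1) * (q ^ (a+1) * q ^ d)
      = (p ^ (a+1) * q ^ (a+1)) * q ^ d := by ring
    _ ≤ (p ^ (a+1) * q ^ (a+1)) * p ^ d := by
        apply mul_le_mul_of_nonneg_left (pow_le_pow_left₀ hq0 hqp d)
        have hp0 : 0 ≤ p := le_trans hq0 hqp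
        positivity
    _ = p ^ (a+1) * p ^ d * q ^ (a+1) := by ring

lemma B_ge (s r : ℕ) (hs : 1 ≤ s) (hsr : s ≤ r) (hr : r + 1 ≤ 2 * s)
    {p : ℝ} (hp : 1/2 ≤ p) (hp1 : p ≤ 1) : p ≤ B r s p := by
  set q : ℝ := 1 - p with hqdef
  have hq0 : 0 ≤ q := by simp only [hqdef]; linarith
  have hqp : q ≤ p := by simp only [hqdef]; linarith
  have hp0 : (0:ℝ) ≤ p := by linarith
  set T : ℝ := ∑ i ∈ Finset.Ico s (r+1), (r.choose i : ℝ) * p ^ (r - i) * q ^ i with hTdef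
  set T2 : ℝ := ∑ i ∈ Finset.Ico s (r+1), (r.choose i : ℝ) * p ^ i * q ^ (r - i) with hT2def
  have h1 : B r s p + T = 1 := by
    rw [B, hTdef, Finset.range_eq_Ico, Finset.sum_Ico_consecutive _ (Nat.zero_le s) (by omega),
      ← Finset.range_eq_Ico]
    calc ∑ i ∈ Finset.range (r+1), (r.choose i : ℝ) * p ^ (r - i) * q ^ i
        = ∑ i ∈ Finset.range (r+1), q ^ i * p ^ (r - i) * (r.choose i : ℝ) := by
          apply Finset.sum_congr rfl; intros; ring
      _ = (q + p) ^ r := (add_pow q p r).symm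
      _ = 1 := by rw [show q + p = 1 by simp [hqdef]]; simp
  have h2 : p * T ≤ q * T2 := by
    rw [hTdef, hT2def, Finset.mul_sum, Finset.mul_sum]
    apply Finset.sum_le_sum
    intro i hi
    rw [Finset.mem_Ico] at hi
    obtain ⟨a, d, ha, hd⟩ : ∃ a d, r - i = a ∧ i = a + 1 + d :=
      ⟨r - i, i - (r - i) - 1, rfl, by omega⟩
    set c := (r.choose i : ℝ) with hc
    have hC : (0:ℝ) ≤ c := Nat.cast_nonneg _
    rw [ha, hd]
    calc p * (c * p ^ a * q ^ (a+1+d))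
        = c * (p ^ (a+1) * q ^ (a+1+d)) := by rw [pow_succ]; ring
      _ ≤ c * (p ^ (a+1+d) * q ^ (a+1)) :=
          mul_le_mul_of_nonneg_left (pow_key hq0 hqp a d) hC
      _ = q * (c * p ^ (a+1+d) * q ^ a) := by rw [pow_succ]; ring
  have h3 : T2 = ∑ j ∈ Finset.range (r - s + 1), (r.choose j : ℝ) * p ^ (r - j) * q ^ j := by
    rw [hT2def]
    apply Finset.sum_nbij' (fun i => r - i) (fun j => r - j)
    · intro i hi; rw [Finset.mem_Ico] at hi; rw [Finset.mem_range]; omega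
    · intro j hj; rw [Finset.mem_range] at hj; rw [Finset.mem_Ico]; omega
    · intro i hi; rw [Finset.mem_Ico] at hi; omega
    · intro j hj; rw [Finset.mem_range] at hj; omega
    · intro i hi
      rw [Finset.mem_Ico] at hi
      have h1 : i ≤ r := by omega
      rw [Nat.choose_symm h1, show r - (r - i) = i by omega]
  have h4 : T2 ≤ B r s p := by
    rw [h3, B]
    apply Finset.sum_le_sum_of_subset_of_nonneg
    · apply Finset.range_subset_range.2; omega
    · intro i _ _; positivity
  have h5 : q * T2 ≤ q * B r s p := mul_le_mul_of_nonneg_left h4 hq0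
  nlinarith [h2.trans h5, h1]

/-- For every `s ≥ 1` and every integer `r` with `s ≤ r ≤ 2s - 1`, the function
`B_{r,s}(p) - 2p + 1` is strictly positive for all `p ∈ [0,1)`; equivalently the
threshold `r(s)` satisfies `r(s) ≥ 2s`. -/
theorem stmt_6 (s r : ℕ) (hs : 1 ≤ s) (hsr : s ≤ r) (hr : r ≤ 2 * s - 1) :
    ∀ p ∈ Set.Ico (0 : ℝ) 1, 0 < B r s p - 2 * p + 1 := by
  intro p hp
  obtain ⟨hp0, hp1⟩ := hp
  rcases lt_or_ge p (1/2) with h | h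
  · have hB : 0 ≤ B r s p := by
      apply Finset.sum_nonneg
      intro i _
      have h1p : (0:ℝ) ≤ 1 - p := by linarith
      positivity
    linarith
  · have := B_ge s r hs hsr (by omega) h (le_of_lt hp1)
    linarith
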